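/- Let S be a ∨-semilattice with minimum 0 and a relation ≺ that is distributive, auxiliary and interpolative. Then the spectrum Ŝ is core compact; indeed every point of Ŝ has a neighbourhood base of compact sets. -/

import Mathlib

variable {S : Type*} [SemilatticeSup S] [OrderBot S]

/-- A (nonempty) filter: an up-set in which any two elements have a common lower bound. -/
def IsFilt (F : Set S) : Prop :=
  F.Nonempty ∧ (∀ p ∈ F, ∀ q, p ≤ q → q ∈ F) ∧
    ∀ p ∈ F, ∀ q ∈ F, ∃ t ∈ F, t ≤ p ∧ t ≤ q

/-- A filter is round if every member has a `r`-predecessor in the filter. -/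
def IsRound (r : S → S → Prop) (F : Set S) : Prop :=
  ∀ p ∈ F, ∃ t ∈ F, r t p

/-- Primeness: `p ⊔ q ∈ P` implies `p ∈ P` or `q ∈ P`. -/
def IsPrimeFilt (P : Set S) : Prop :=
  ∀ p q, p ⊔ q ∈ P → p ∈ P ∨ q ∈ P

/-- The spectrum: proper round prime filters. -/
def Spec (r : S → S → Prop) : Type _ :=
  {P : Set S // IsFilt P ∧ IsRound r P ∧ IsPrimeFilt P ∧ ⊥ ∉ P}

/-- The basic open set `Ŝ_p`. -/
def basicOpen (r : S → S → Prop) (p : S) : Set (Spec r) :=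
  {P | p ∈ P.1}

instance specTop (r : S → S → Prop) : TopologicalSpace (Spec r) :=
  TopologicalSpace.generateFrom (Set.range (basicOpen r))

/-- Distributivity of `r`. -/
def IsDistrib (r : S → S → Prop) : Prop :=
  ∀ p s t, r p (s ⊔ t) → ∀ p', r p' p →
    ∃ s' t', r s' s ∧ r t' t ∧ p' ≤ s' ⊔ t' ∧ s' ⊔ t' ≤ p

/-- `r` is auxiliary. -/
def IsAux (r : S → S → Prop) : Prop :=
  (∀ p p' q' q, p ≤ p' → r p' q' → q' ≤ q → r p q) ∧ ∀ p q, r p q → p ≤ q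

/-- `r` is interpolative. -/
def IsInterp (r : S → S → Prop) : Prop :=
  ∀ p q, r p q → ∃ s, r p s ∧ r s q

/-- `r` is approximating: `≤` is the lower preorder of `r`. -/
def IsApprox (r : S → S → Prop) : Prop :=
  ∀ p q, p ≤ q ↔ ∀ t, r t p → r t q

/-- `r` is `∨`-preserving. -/
def IsSupPres (r : S → S → Prop) : Prop :=
  ∀ p p' q q', r p' p → r q' q → r (p' ⊔ q') (p ⊔ q)

/-- `S` with `r` is a `∨`-predomain. -/
def IsPredom (r : S → S → Prop) : Prop :=
  IsAux r ∧ IsApprox r ∧ IsInterp r ∧ IsSupPres r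

/-- Ideal: downward closed and closed under pairwise joins. -/
def IsIdl (I : Set S) : Prop :=
  (∀ p ∈ I, ∀ q, q ≤ p → q ∈ I) ∧ ∀ p ∈ I, ∀ q ∈ I, p ⊔ q ∈ I

/-- The way-below relation on subsets of a topological space:
every open cover of `q` has a finite subcover of `p`. -/
def WayBelow {X : Type*} [TopologicalSpace X] (p q : Set X) : Prop :=
  ∀ C : Set (Set X), (∀ U ∈ C, IsOpen U) → q ⊆ ⋃₀ C →
    ∃ F ⊆ C, F.Finite ∧ p ⊆ ⋃₀ F

/-- Core compactness. -/
def CoreCompact (X : Type*) [TopologicalSpace X] : Prop :=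
  ∀ (x : X) (U : Set X), IsOpen U → x ∈ U → ∃ V, IsOpen V ∧ x ∈ V ∧ WayBelow V U

/-- A `∪`-basis: a basis containing `∅` and closed under pairwise unions. -/
def IsUnionBasis {X : Type*} [TopologicalSpace X] (B : Set (Set X)) : Prop :=
  TopologicalSpace.IsTopologicalBasis B ∧ ∅ ∈ B ∧ ∀ p ∈ B, ∀ q ∈ B, p ∪ q ∈ B

/-- The basic opens form a topological basis of the spectrum. -/
lemma specBasis (r : S → S → Prop) :
    TopologicalSpace.IsTopologicalBasis (Set.range (basicOpen r)) := by
  refine ⟨?_, ?_, rfl⟩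
  · rintro _ ⟨a, rfl⟩ _ ⟨b, rfl⟩ R hR
    obtain ⟨t, htR, hta, htb⟩ := R.2.1.2.2 a hR.1 b hR.2
    exact ⟨basicOpen r t, ⟨t, rfl⟩, htR,
      fun R' ht' => ⟨R'.2.1.2.1 t ht' a hta, R'.2.1.2.1 t ht' b htb⟩⟩
  · apply Set.eq_univ_of_forall
    intro R
    obtain ⟨x, hx⟩ := R.2.1.1
    exact Set.mem_sUnion.mpr ⟨basicOpen r x, ⟨x, rfl⟩, hx⟩

/-- From membership of a finite sup in a proper prime filter, extract a member. -/
lemma exists_mem_of_sup_mem {P : Set S} (hprime : IsPrimeFilt P) (hbot : (⊥ : S) ∉ P)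
    (F : Finset S) : F.sup id ∈ P → ∃ b ∈ F, b ∈ P := by
  classical
  induction F using Finset.induction_on with
  | empty => intro h; rw [Finset.sup_empty] at h; exact absurd h hbot
  | @insert a F hna ih =>
      intro h
      rw [Finset.sup_insert] at h
      rcases hprime _ _ h with h1 | h2
      · exact ⟨a, Finset.mem_insert_self a F, h1⟩
      · obtain ⟨b, hb, hbP⟩ := ih h2
        exact ⟨b, Finset.mem_insert_of_mem hb, hbP⟩

/-- The saturation of a descending interpolation chain is compact. -/
lemma compact_chain (r : S → S → Prop) (hd : IsDistrib r) (ha : IsAux r)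
    (z : ℕ → S) (hz : ∀ n, r (z (n + 1)) (z n)) :
    IsCompact {R : Spec r | ∀ n, z n ∈ R.1} := by
  classical
  have mono : ∀ n k, z (n + k) ≤ z n := by
    intro n k
    induction k with
    | zero => exact le_rfl
    | succ k ih => exact le_trans (ha.2 _ _ (hz (n + k))) ih
  have mono' : ∀ {m n : ℕ}, n ≤ m → z m ≤ z n := by
    intro m n h
    obtain ⟨k, rfl⟩ := Nat.exists_eq_add_of_le h
    exact mono n k
  apply isCompact_of_finite_subcover
  intro ι U hUo hcov
  set B0 : Set S := {b | ∃ i, basicOpen r b ⊆ U i} with hB0def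
  set A : Set S := {a | ∃ F : Finset S, ↑F ⊆ B0 ∧ a ≤ F.sup id} with hAdef
  by_cases hW : ∃ a ∈ A, ∃ n, z n ≤ a
  · -- a finite subcover exists outright
    obtain ⟨a, ⟨F, hFB, haF⟩, n, hna⟩ := hW
    have hbF : ∀ b ∈ F, ∃ i, basicOpen r b ⊆ U i := fun b hb => hFB hb
    choose f hf using hbF
    refine ⟨F.attach.image (fun b => f b.1 b.2), ?_⟩
    intro R hR
    have hsup : F.sup id ∈ R.1 := R.2.1.2.1 (z n) (hR n) _ (le_trans hna haF)
    obtain ⟨b, hbF', hbR⟩ := exists_mem_of_sup_mem R.2.2.2.1 R.2.2.2.2 F hsup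
    exact Set.mem_iUnion₂.mpr ⟨f b hbF',
      Finset.mem_image.mpr ⟨⟨b, hbF'⟩, Finset.mem_attach F _, rfl⟩, hf b hbF' hbR⟩
  · push_neg at hW
    -- Zorn's lemma: maximal ideal J ⊇ A avoiding the up-set of the chain
    set 𝒮 : Set (Set S) := {J | IsIdl J ∧ A ⊆ J ∧ ∀ w ∈ J, ∀ n, ¬ z n ≤ w} with h𝒮def
    have hA𝒮 : A ∈ 𝒮 := by
      refine ⟨⟨?_, ?_⟩, subset_rfl, hW⟩
      · rintro p ⟨F, h1, h2⟩ q hq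
        exact ⟨F, h1, hq.trans h2⟩
      · rintro p ⟨F1, hF1, hp⟩ q ⟨F2, hF2, hq⟩
        refine ⟨F1 ∪ F2, ?_, ?_⟩
        · rw [Finset.coe_union]; exact Set.union_subset hF1 hF2
        · rw [Finset.sup_union]; exact sup_le_sup hp hq
    have hZorn : ∀ c ⊆ 𝒮, IsChain (· ⊆ ·) c → c.Nonempty →
        ∃ ub ∈ 𝒮, ∀ s ∈ c, s ⊆ ub := by
      intro c hc hchain hcne
      obtain ⟨J0, hJ0⟩ := hcne
      refine ⟨⋃₀ c, ⟨⟨?_, ?_⟩, ?_, ?_⟩, fun s hs => Set.subset_sUnion_of_mem hs⟩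
      · rintro p ⟨t, htc, hpt⟩ q hq
        exact ⟨t, htc, (hc htc).1.1 p hpt q hq⟩
      · rintro p ⟨t1, h1, hp⟩ q ⟨t2, h2, hq⟩
        rcases hchain.total h1 h2 with h | h
        · exact ⟨t2, h2, (hc h2).1.2 p (h hp) q hq⟩
        · exact ⟨t1, h1, (hc h1).1.2 p hp q (h hq)⟩
      · exact ((hc hJ0).2.1).trans (Set.subset_sUnion_of_mem hJ0)
      · rintro w ⟨t, htc, hwt⟩ n
        exact (hc htc).2.2 w hwt n
    obtain ⟨J, hAJ, hJmax⟩ := zorn_subset_nonempty 𝒮 hZorn A hA𝒮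
    obtain ⟨⟨hJdown, hJjoin⟩, hAJ2, hJW⟩ := hJmax.1
    have hbotJ : (⊥ : S) ∈ J := hAJ2 ⟨∅, by simp, by simp⟩
    -- certificate from maximality
    have cert : ∀ x, x ∉ J → ∃ n, ∃ j ∈ J, z n ≤ j ⊔ x := by
      intro x hx
      set J' : Set S := {v | ∃ j ∈ J, v ≤ j ⊔ x} with hJ'def
      have hJJ' : J ⊆ J' := fun v hv => ⟨v, hv, le_sup_left⟩
      have hxJ' : x ∈ J' := ⟨⊥, hbotJ, by simp⟩
      have hJ'i : IsIdl J' := by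
        constructor
        · rintro p ⟨j, hj, hp⟩ q hq
          exact ⟨j, hj, hq.trans hp⟩
        · rintro p ⟨j1, hj1, hp⟩ q ⟨j2, hj2, hq⟩
          refine ⟨j1 ⊔ j2, hJjoin j1 hj1 j2 hj2, sup_le ?_ ?_⟩
          · exact hp.trans (sup_le_sup_right le_sup_left x)
          · exact hq.trans (sup_le_sup_right le_sup_right x)
      have hne : J' ∉ 𝒮 := fun h => hx (hJmax.2 h hJJ' hxJ')
      have hWfail : ¬ (∀ w ∈ J', ∀ n, ¬ z n ≤ w) := fun hw =>
        hne ⟨hJ'i, hAJ2.trans hJJ', hw⟩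
      push_neg at hWfail
      obtain ⟨w, ⟨j, hj, hwjx⟩, n, hznw⟩ := hWfail
      exact ⟨n, j, hj, hznw.trans hwjx⟩
    -- complement of J is round
    have roundc : ∀ x, x ∉ J → ∃ x', r x' x ∧ x' ∉ J := by
      intro x hx
      obtain ⟨n, j, hj, hle⟩ := cert x hx
      have h1 : r (z (n + 1)) (j ⊔ x) := ha.1 _ _ _ _ le_rfl (hz n) hle
      obtain ⟨j', x', hj', hx', hl1, hl2⟩ := hd _ _ _ h1 _ (hz (n + 1))
      refine ⟨x', hx', fun hx'J => ?_⟩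
      have hjj : j' ⊔ x' ∈ J := hJjoin j' (hJdown j hj j' (ha.2 _ _ hj')) x' hx'J
      exact hJW _ hjj (n + 2) hl1
    set PP : Set S := {v | v ∉ J} with hPPdef
    have hzP : ∀ n, z n ∈ PP := fun n h => hJW _ h n le_rfl
    have hup : ∀ p ∈ PP, ∀ q, p ≤ q → q ∈ PP :=
      fun p hp q hpq hqJ => hp (hJdown q hqJ p hpq)
    -- complement of J is directed
    have hdir : ∀ x ∈ PP, ∀ y ∈ PP, ∃ t ∈ PP, t ≤ x ∧ t ≤ y := by
      intro x hx y hy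
      by_contra hcon
      push_neg at hcon
      have hcon' : ∀ t, t ≤ x → t ≤ y → t ∈ J := by
        intro t h1 h2
        by_contra h3
        exact (hcon t h3) h1 h2
      set Jx : Set S := {v | ∀ u, r u v → u ≤ x → u ∈ J} with hJxdef
      have hJJx : J ⊆ Jx := fun v hv u hu _ => hJdown v hv u (ha.2 _ _ hu)
      have hyJx : y ∈ Jx := fun u hu hux => hcon' u hux (ha.2 _ _ hu)
      have hJxIdl : IsIdl Jx := by
        constructor
        · intro p hp q hq u hu hux
          exact hp u (ha.1 _ _ _ _ le_rfl hu hq) hux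
        · intro p hp q hq u hu hux
          by_contra huJ
          obtain ⟨u', hu', hu'J⟩ := roundc u huJ
          obtain ⟨a, b, haa, hbb, h1, h2⟩ := hd _ _ _ hu _ hu'
          have haJ : a ∈ J := hp a haa (le_trans (le_trans le_sup_left h2) hux)
          have hbJ : b ∈ J := hq b hbb (le_trans (le_trans le_sup_right h2) hux)
          exact hu'J (hJdown _ (hJjoin a haJ b hbJ) u' h1)
      have hWfail : ¬ (∀ w ∈ Jx, ∀ n, ¬ z n ≤ w) := fun hw =>
        hy (hJmax.2 ⟨hJxIdl, hAJ2.trans hJJx, hw⟩ hJJx hyJx)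
      push_neg at hWfail
      obtain ⟨zs, hzsJx, k, hkzs⟩ := hWfail
      obtain ⟨M, j, hj, hMle⟩ := cert x hx
      set R0 := max k M with hR0def
      have h1 : r (z (R0 + 1)) (j ⊔ x) :=
        ha.1 _ _ _ _ le_rfl (hz R0) (le_trans (mono' (le_max_right k M)) hMle)
      obtain ⟨j', x', hj', hx', hl1, hl2⟩ := hd _ _ _ h1 _ (hz (R0 + 1))
      have hx'J : x' ∉ J := by
        intro hmem
        have hjj : j' ⊔ x' ∈ J := hJjoin j' (hJdown j hj j' (ha.2 _ _ hj')) x' hmem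
        exact hJW _ hjj (R0 + 2) hl1
      have hx'zs : r x' zs :=
        ha.1 _ _ _ _ (le_trans le_sup_right hl2) (hz R0)
          (le_trans (mono' (le_max_left k M)) hkzs)
      exact hx'J (hzsJx x' hx'zs (ha.2 _ _ hx'))
    have hprime : IsPrimeFilt PP := by
      intro a b hab
      by_contra h
      push_neg at h
      exact hab (hJjoin a (not_not.mp h.1) b (not_not.mp h.2))
    set Pt : Spec r :=
      ⟨PP, ⟨⟨z 0, hzP 0⟩, hup, hdir⟩,
        fun p hp => ((roundc p hp).imp (fun x' h => ⟨h.2, h.1⟩)),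
        hprime, fun h => h hbotJ⟩ with hPtdef
    have hPt : Pt ∈ {R : Spec r | ∀ n, z n ∈ R.1} := fun n => hzP n
    obtain ⟨i, hi⟩ := Set.mem_iUnion.mp (hcov hPt)
    obtain ⟨V, ⟨b, rfl⟩, hbPt, hVU⟩ :=
      (specBasis r).exists_subset_of_mem_open hi (hUo i)
    have hbA : b ∈ A := ⟨{b}, by rw [Finset.coe_singleton, Set.singleton_subset_iff]; exact ⟨i, hVU⟩, by simp⟩
    exact absurd (hAJ2 hbA) hbPt

/-- Key lemma: inside every basic open around a point there is a smaller basic open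
with a compact set squeezed in between. -/
lemma key_lemma (r : S → S → Prop) (hd : IsDistrib r) (ha : IsAux r) (hi : IsInterp r)
    (P₀ : Spec r) (p : S) (hp : p ∈ P₀.1) :
    ∃ q ∈ P₀.1, ∃ C : Set (Spec r),
      IsCompact C ∧ basicOpen r q ⊆ C ∧ C ⊆ basicOpen r p := by
  classical
  obtain ⟨q, hqP, hqp⟩ := P₀.2.2.1 p hp
  let T := {x : S // r q x}
  let step : T → T := fun x =>
    ⟨Classical.choose (hi q x.1 x.2), (Classical.choose_spec (hi q x.1 x.2)).1⟩
  have hstep : ∀ x : T, r (step x).1 x.1 :=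
    fun x => (Classical.choose_spec (hi q x.1 x.2)).2
  let zz : ℕ → T := fun n => step^[n] ⟨p, hqp⟩
  have hzsucc : ∀ n, zz (n + 1) = step (zz n) := fun n => Function.iterate_succ_apply' step n _
  have hz : ∀ n, r ((zz (n + 1)).1) ((zz n).1) := by
    intro n
    rw [hzsucc n]
    exact hstep (zz n)
  refine ⟨q, hqP, {R : Spec r | ∀ n, (zz n).1 ∈ R.1},
    compact_chain r hd ha (fun n => (zz n).1) hz, ?_, ?_⟩
  · intro R hqR n
    exact R.2.1.2.1 q hqR _ (ha.2 _ _ (zz n).2)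
  · intro R hR
    exact hR 0

theorem stmt11 (r : S → S → Prop) (hd : IsDistrib r) (ha : IsAux r) (hi : IsInterp r) :
    CoreCompact (Spec r) ∧
      ∀ (P : Spec r) (U : Set (Spec r)), IsOpen U → P ∈ U →
        ∃ C, IsCompact C ∧ C ∈ nhds P ∧ C ⊆ U := by
  constructor
  · intro P U hU hPU
    obtain ⟨V, ⟨p, rfl⟩, hPV, hVU⟩ := (specBasis r).exists_subset_of_mem_open hPU hU
    obtain ⟨q, hqP, C, hCcomp, hQC, hCp⟩ := key_lemma r hd ha hi P p hPV
    refine ⟨basicOpen r q, (specBasis r).isOpen ⟨q, rfl⟩, hqP, ?_⟩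
    intro 𝒞 h𝒞 hcov
    have hCU : C ⊆ ⋃ (i : 𝒞), (i : Set (Spec r)) := by
      intro R hR
      have : R ∈ ⋃₀ 𝒞 := hcov (hVU (hCp hR))
      rwa [Set.sUnion_eq_iUnion] at this
    obtain ⟨t, ht⟩ := hCcomp.elim_finite_subcover
      (fun c : 𝒞 => (c : Set (Spec r))) (fun c => h𝒞 c c.2) hCU
    refine ⟨Subtype.val '' (↑t : Set 𝒞), ?_, Set.Finite.image Subtype.val t.finite_toSet, ?_⟩
    · rintro _ ⟨c, _, rfl⟩
      exact c.2
    · intro R hR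
      obtain ⟨i, hit, hiR⟩ := Set.mem_iUnion₂.mp (ht (hQC hR))
      exact Set.mem_sUnion.mpr ⟨↑i, ⟨i, hit, rfl⟩, hiR⟩
  · intro P U hU hPU
    obtain ⟨V, ⟨p, rfl⟩, hPV, hVU⟩ := (specBasis r).exists_subset_of_mem_open hPU hU
    obtain ⟨q, hqP, C, hCcomp, hQC, hCp⟩ := key_lemma r hd ha hi P p hPV
    exact ⟨C, hCcomp,
      mem_nhds_iff.mpr ⟨basicOpen r q, hQC, (specBasis r).isOpen ⟨q, rfl⟩, hqP⟩,
      hCp.trans hVU⟩
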